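/- Fix a depth L ≥ 2, widths M₀, …, M_L ∈ ℕ, and ranks r₁^ℓ, r₂^ℓ, r̂^ℓ ∈ ℕ. For ℓ = 1, …, L let U^ℓ ∈ ℝ^{M_ℓ × r₁^ℓ}, V^ℓ ∈ ℝ^{M_{ℓ−1} × r₁^ℓ}, B^ℓ ∈ ℝ^{M_ℓ × r₂^ℓ}, and coefficients s₁^ℓ ∈ ℝ^{r₁^ℓ}, s₂^ℓ ∈ ℝ^{r₂^ℓ}, and a vector b^L ∈ ℝ^{M_L}. Given an input x ∈ ℝ^{M₀}, define the LRNR hidden states by z⁰ := x, z^ℓ := σ( U^ℓ diag(s₁^ℓ) (V^ℓ)^⊤ z^{ℓ−1} + B^ℓ s₂^ℓ ) for ℓ = 1, …, L−1, and output z^L := U^L diag(s₁^L) (V^L)^⊤ z^{L−1} + b^L, where σ is the entrywise ReLU σ(β) = max(β,0). For each ℓ = 1, …, L−1 let Ξ^ℓ ∈ ℝ^{M_ℓ × r̂^ℓ} and let (P^ℓ)^⊤ : ℝ^{M_ℓ} → ℝ^{r̂^ℓ} be a coordinate-selection map such that (P^ℓ)^⊤ Ξ^ℓ is invertible. Define the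 FastLRNR states: ẑ¹ := σ( (P¹)^⊤ U¹ diag(s₁¹) (V¹)^⊤ x + (P¹)^⊤ B¹ s₂¹ ), and for ℓ = 2, …, L−1, ẑ^ℓ := σ( (P^ℓ)^⊤ U^ℓ diag(s₁^ℓ) (V̂^ℓ)^⊤ ẑ^{ℓ−1} + (P^ℓ)^⊤ B^ℓ s₂^ℓ ) where (V̂^ℓ)^⊤ := (V^ℓ)^⊤ Ξ^{ℓ−1} ((P^{ℓ−1})^⊤ Ξ^{ℓ−1})^{−1}, and the FastLRNR output ŷ := U^L diag(s₁^L) (V̂^L)^⊤ ẑ^{L−1} + b^L with (V̂^L)^⊤ := (V^L)^⊤ Ξ^{L−1} ((P^{L−1})^⊤ Ξ^{L−1})^{−1}. If for this input and these coefficients every hidden state lies in the corresponding column space, z^ℓ ∈ colspan(Ξ^ℓ) for ℓ = 1, …, L−1, then ẑ^ℓ = (P^ℓ)^⊤ z^ℓ for all ℓ = 1, …, L−1 and ŷ = z^L. -/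
import Mathlib


open Matrix

/-- The entrywise ReLU. -/
noncomputable def vrelu {k : ℕ} (v : Fin k → ℝ) : Fin k → ℝ := fun j => max (v j) 0

/-- Exactness of the FastLRNR compression: consider a LRNR of depth `L ≥ 2` with hidden
states `z⁰ = x`, `z^ℓ = σ(U^ℓ diag(s₁^ℓ) (V^ℓ)ᵀ z^{ℓ−1} + B^ℓ s₂^ℓ)` for `1 ≤ ℓ ≤ L−1`
and output `z^L = U^L diag(s₁^L) (V^L)ᵀ z^{L−1} + b^L`.  Given, for each hidden layer,
a basis matrix `Ξ^ℓ` and a coordinate-selection map `Pᵀ` (an injection `ι ℓ`) with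
`(P^ℓ)ᵀ Ξ^ℓ` invertible, form the FastLRNR states `ẑ^ℓ` with compressed matrices
`(V̂^ℓ)ᵀ = (V^ℓ)ᵀ Ξ^{ℓ−1} ((P^{ℓ−1})ᵀ Ξ^{ℓ−1})⁻¹`, `Û^ℓ = (P^ℓ)ᵀU^ℓ`, `B̂^ℓ = (P^ℓ)ᵀB^ℓ`
and output `ŷ`.  If each hidden state lies in the column space of the corresponding `Ξ^ℓ`,
then `ẑ^ℓ = (P^ℓ)ᵀ z^ℓ` for `1 ≤ ℓ ≤ L−1` and `ŷ = z^L`. -/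
theorem fastlrnr_exact
    (L : ℕ) (hL : 2 ≤ L)
    (Mw r₁ r₂ rh : ℕ → ℕ)
    (U : (ℓ : ℕ) → Matrix (Fin (Mw ℓ)) (Fin (r₁ ℓ)) ℝ)
    (V : (ℓ : ℕ) → Matrix (Fin (Mw (ℓ - 1))) (Fin (r₁ ℓ)) ℝ)
    (B : (ℓ : ℕ) → Matrix (Fin (Mw ℓ)) (Fin (r₂ ℓ)) ℝ)
    (s₁ : (ℓ : ℕ) → Fin (r₁ ℓ) → ℝ) (s₂ : (ℓ : ℕ) → Fin (r₂ ℓ) → ℝ)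
    (bL : Fin (Mw L) → ℝ)
    (x : Fin (Mw 0) → ℝ)
    -- the LRNR hidden states and output
    (z : (ℓ : ℕ) → Fin (Mw ℓ) → ℝ)
    (hz0 : z 0 = x)
    (hz : ∀ ℓ, 1 ≤ ℓ → ℓ ≤ L - 1 →
      z ℓ = vrelu ((U ℓ).mulVec (fun k => s₁ ℓ k * ((V ℓ)ᵀ.mulVec (z (ℓ - 1))) k) +
        (B ℓ).mulVec (s₂ ℓ)))
    (hzL : z L = (U L).mulVec (fun k => s₁ L k * ((V L)ᵀ.mulVec (z (L - 1))) k) + bL)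
    -- the empirical interpolation data
    (Ξ : (ℓ : ℕ) → Matrix (Fin (Mw ℓ)) (Fin (rh ℓ)) ℝ)
    (ι : (ℓ : ℕ) → Fin (rh ℓ) → Fin (Mw ℓ))
    (hι : ∀ ℓ, 1 ≤ ℓ → ℓ ≤ L - 1 → Function.Injective (ι ℓ))
    (hinv : ∀ ℓ, 1 ≤ ℓ → ℓ ≤ L - 1 → IsUnit ((Ξ ℓ).submatrix (ι ℓ) id).det)
    -- the FastLRNR states and output
    (zh : (ℓ : ℕ) → Fin (rh ℓ) → ℝ)
    (hzh1 : zh 1 = vrelu (((U 1).submatrix (ι 1) id).mulVec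
        (fun k => s₁ 1 k * ((V 1)ᵀ.mulVec x) k) +
      ((B 1).submatrix (ι 1) id).mulVec (s₂ 1)))
    (hzh : ∀ ℓ, 2 ≤ ℓ → ℓ ≤ L - 1 →
      zh ℓ = vrelu (((U ℓ).submatrix (ι ℓ) id).mulVec
          (fun k => s₁ ℓ k *
            (((V ℓ)ᵀ * Ξ (ℓ - 1) * ((Ξ (ℓ - 1)).submatrix (ι (ℓ - 1)) id)⁻¹).mulVec
              (zh (ℓ - 1))) k) +
        ((B ℓ).submatrix (ι ℓ) id).mulVec (s₂ ℓ)))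
    (yh : Fin (Mw L) → ℝ)
    (hyh : yh = (U L).mulVec
        (fun k => s₁ L k *
          (((V L)ᵀ * Ξ (L - 1) * ((Ξ (L - 1)).submatrix (ι (L - 1)) id)⁻¹).mulVec
            (zh (L - 1))) k) + bL)
    -- the hidden states lie in the sampled subspaces
    (hsub : ∀ ℓ, 1 ≤ ℓ → ℓ ≤ L - 1 → ∃ q : Fin (rh ℓ) → ℝ, z ℓ = (Ξ ℓ).mulVec q) :
    (∀ ℓ, 1 ≤ ℓ → ℓ ≤ L - 1 → zh ℓ = fun j => z ℓ (ι ℓ j)) ∧ yh = z L := by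
  -- reconstruction lemma
  have recon : ∀ ℓ, 1 ≤ ℓ → ℓ ≤ L - 1 → zh ℓ = (fun j => z ℓ (ι ℓ j)) →
      (Ξ ℓ * ((Ξ ℓ).submatrix (ι ℓ) id)⁻¹).mulVec (zh ℓ) = z ℓ := by
    intro ℓ h1 h2 hzhℓ
    obtain ⟨q, hq⟩ := hsub ℓ h1 h2
    have hA : ((Ξ ℓ).submatrix (ι ℓ) id)⁻¹ * ((Ξ ℓ).submatrix (ι ℓ) id) = 1 :=
      Matrix.nonsing_inv_mul _ (hinv ℓ h1 h2)
    have hzh' : zh ℓ = ((Ξ ℓ).submatrix (ι ℓ) id).mulVec q := by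
      funext j
      simp [hzhℓ, hq, Matrix.mulVec, dotProduct]
    rw [hzh', ← Matrix.mulVec_mulVec, Matrix.mulVec_mulVec, Matrix.mulVec_mulVec,
      Matrix.mul_assoc, hA, Matrix.mul_one, hq]
  have key : ∀ ℓ, 1 ≤ ℓ → ℓ ≤ L - 1 → zh ℓ = fun j => z ℓ (ι ℓ j) := by
    intro ℓ
    induction ℓ with
    | zero => omega
    | succ n ih =>
      intro h1 h2
      rcases Nat.eq_zero_or_pos n with hn | hn
      · subst hn
        rw [hzh1, hz 1 (by omega) h2]
        funext j
        simp [vrelu, Matrix.mulVec, dotProduct, hz0]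
      · have hn2 : n ≤ L - 1 := by omega
        have ihn := ih hn hn2
        have hrec := recon n hn hn2 ihn
        have hspec := hzh (n + 1) (by omega) h2
        have hzz := hz (n + 1) (by omega) h2
        simp only [Nat.succ_sub_one, Nat.add_sub_cancel] at hspec hzz
        rw [Matrix.mul_assoc, ← Matrix.mulVec_mulVec, hrec] at hspec
        rw [hspec, hzz]
        funext j
        simp [vrelu, Matrix.mulVec, dotProduct]
  refine ⟨key, ?_⟩
  have h1 : 1 ≤ L - 1 := by omega
  have hrec := recon (L - 1) h1 le_rfl (key (L - 1) h1 le_rfl)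
  have hV : (((V L)ᵀ * Ξ (L - 1) * ((Ξ (L - 1)).submatrix (ι (L - 1)) id)⁻¹).mulVec
      (zh (L - 1))) = (V L)ᵀ.mulVec (z (L - 1)) := by
    rw [Matrix.mul_assoc, ← Matrix.mulVec_mulVec, hrec]
  rw [hyh, hV, hzL]
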